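/- Every ordering of the vertices of a graph G produced by Maximum Cardinality Search (at each step, pick an unvisited vertex with the maximum number of visited neighbors) satisfies the MNS 3-point condition: if a \prec b \prec c, ac \in E and ab \notin E, then there exists d \prec b with db \in E and dc \notin E. -/
import Mathlib


/-- Every MCS ordering (each successive vertex has a maximum number of already-visited
neighbors among the unvisited vertices) satisfies the MNS 3-point condition. -/
theorem mcs_satisfies_mns {V : Type*} [Fintype V] (G : SimpleGraph V)
    (σ : Fin (Fintype.card V) ≃ V)
    (hmcs : ∀ i j : Fin (Fintype.card V), i ≤ j →
      ({k : Fin (Fintype.card V) | k < i ∧ G.Adj (σ k) (σ j)}).ncard ≤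
        ({k : Fin (Fintype.card V) | k < i ∧ G.Adj (σ k) (σ i)}).ncard) :
    ∀ a b c : Fin (Fintype.card V), a < b → b < c →
      G.Adj (σ a) (σ c) → ¬ G.Adj (σ a) (σ b) →
      ∃ d, d < b ∧ G.Adj (σ d) (σ b) ∧ ¬ G.Adj (σ d) (σ c) := by
  intro a b c hab hbc hac hnab
  by_contra h
  push_neg at h
  have hmcsb := hmcs b c hbc.le
  have hsub : ({k : Fin (Fintype.card V) | k < b ∧ G.Adj (σ k) (σ b)}) ⊂
      ({k : Fin (Fintype.card V) | k < b ∧ G.Adj (σ k) (σ c)}) := by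
    constructor
    · rintro k ⟨hk, hadj⟩
      exact ⟨hk, h k hk hadj⟩
    · intro hcon
      exact hnab (hcon ⟨hab, hac⟩).2
  have := Set.ncard_lt_ncard hsub (Set.toFinite _)
  omega
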